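/- Let 0 < α < 1. Then the series Σ_{k=0}^{∞} ω_k^{(α)} converges and its sum equals 0. -/

import Mathlib

open Finset

/-- The coefficients `g_k^{(γ)}`: `g_0 = 1`, `g_k = (1 - (γ+1)/k) g_{k-1}` for `k ≥ 1`. -/
noncomputable def gcoef (γ : ℝ) : ℕ → ℝ
  | 0 => 1
  | k + 1 => (1 - (γ + 1) / (k + 1)) * gcoef γ k

/-- The coefficients `ω_k^{(γ)}`: `ω_0 = (γ/2) g_0` and
`ω_k = (γ/2) g_k + ((2-γ)/2) g_{k-1}` for `k ≥ 1`. -/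
noncomputable def wcoef (γ : ℝ) : ℕ → ℝ
  | 0 => γ / 2 * gcoef γ 0
  | k + 1 => γ / 2 * gcoef γ (k + 1) + (2 - γ) / 2 * gcoef γ k

lemma gcoef_succ_eq (γ : ℝ) (n : ℕ) :
    gcoef γ (n + 1) = -γ / (n + 1) * gcoef (γ - 1) n := by
  induction n with
  | zero => simp [gcoef]
  | succ n ih =>
    have h1 : ((n : ℝ) + 1) ≠ 0 := by positivity
    have h2 : ((n : ℝ) + 1 + 1) ≠ 0 := by positivity
    show (1 - (γ + 1) / (↑(n + 1) + 1)) * gcoef γ (n + 1) = _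
    rw [ih]
    show _ = -γ / (↑(n + 1) + 1) * ((1 - (γ - 1 + 1) / (↑n + 1)) * gcoef (γ - 1) n)
    push_cast
    field_simp
    ring

lemma gcoef_shift (γ : ℝ) (n : ℕ) :
    gcoef (γ - 1) (n + 1) = gcoef (γ - 1) n + gcoef γ (n + 1) := by
  have h2 : gcoef (γ - 1) (n + 1) = (1 - (γ - 1 + 1) / ((n : ℝ) + 1)) * gcoef (γ - 1) n := rfl
  rw [h2, gcoef_succ_eq]
  have h1 : ((n : ℝ) + 1) ≠ 0 := by positivity
  field_simp
  ring

lemma sum_wcoef (α : ℝ) (n : ℕ) :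
    ∑ k ∈ Finset.range (n + 1), wcoef α k =
      gcoef (α - 1) n - (1 - α / 2) * gcoef α n := by
  induction n with
  | zero => simp [wcoef, gcoef]
  | succ n ih =>
    rw [Finset.sum_range_succ, ih, gcoef_shift α n]
    show _ = _ - _ * gcoef α (n + 1)
    have : wcoef α (n + 1) = α / 2 * gcoef α (n + 1) + (2 - α) / 2 * gcoef α n := rfl
    rw [this]
    ring

lemma gcoef_pos_le (α : ℝ) (hα0 : 0 < α) (hα1 : α < 1) (n : ℕ) :
    0 < gcoef (α - 1) n ∧
      gcoef (α - 1) n ≤ Real.exp (-α * ∑ j ∈ Finset.range n, (1 : ℝ) / (j + 1)) := by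
  induction n with
  | zero => simp [gcoef]
  | succ n ih =>
    obtain ⟨hpos, hle⟩ := ih
    have h1 : (0 : ℝ) < (n : ℝ) + 1 := by positivity
    have hfac : gcoef (α - 1) (n + 1) = (1 - α / (n + 1)) * gcoef (α - 1) n := by
      show (1 - (α - 1 + 1) / (↑n + 1)) * gcoef (α - 1) n = _
      ring_nf
    have hfpos : 0 < 1 - α / ((n : ℝ) + 1) := by
      have : α / ((n : ℝ) + 1) ≤ α / 1 := by
        apply div_le_div_of_nonneg_left hα0.le one_pos
        linarith
      simp at this
      linarith
    constructor
    · rw [hfac]; exact mul_pos hfpos hpos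
    · rw [hfac, Finset.sum_range_succ]
      have hexp : 1 - α / ((n : ℝ) + 1) ≤ Real.exp (-(α / ((n : ℝ) + 1))) := by
        have := Real.add_one_le_exp (-(α / ((n : ℝ) + 1)))
        linarith
      calc (1 - α / ((n : ℝ) + 1)) * gcoef (α - 1) n
          ≤ Real.exp (-(α / ((n : ℝ) + 1))) *
            Real.exp (-α * ∑ j ∈ Finset.range n, (1 : ℝ) / (j + 1)) := by
            apply mul_le_mul hexp hle hpos.le (Real.exp_pos _).le
        _ = Real.exp (-α * (∑ j ∈ Finset.range n, (1 : ℝ) / (j + 1) + 1 / (↑n + 1))) := by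
            rw [← Real.exp_add]; congr 1; ring

lemma gcoef_sub_one_tendsto (α : ℝ) (hα0 : 0 < α) (hα1 : α < 1) :
    Filter.Tendsto (gcoef (α - 1)) Filter.atTop (nhds 0) := by
  have hH : Filter.Tendsto (fun n : ℕ => ∑ j ∈ Finset.range n, (1 : ℝ) / (j + 1))
      Filter.atTop Filter.atTop := by
    simpa using Real.tendsto_sum_range_one_div_nat_succ_atTop
  have hmul : Filter.Tendsto
      (fun n : ℕ => -α * ∑ j ∈ Finset.range n, (1 : ℝ) / (j + 1))
      Filter.atTop Filter.atBot := by
    have := hH.const_mul_atTop hα0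
    have hneg : Filter.Tendsto
        (fun n : ℕ => -(α * ∑ j ∈ Finset.range n, (1 : ℝ) / (j + 1)))
        Filter.atTop Filter.atBot := Filter.tendsto_neg_atTop_atBot.comp this
    simpa [neg_mul] using hneg
  have hexp : Filter.Tendsto
      (fun n : ℕ => Real.exp (-α * ∑ j ∈ Finset.range n, (1 : ℝ) / (j + 1)))
      Filter.atTop (nhds 0) := Real.tendsto_exp_atBot.comp hmul
  refine squeeze_zero (fun n => (gcoef_pos_le α hα0 hα1 n).1.le)
    (fun n => (gcoef_pos_le α hα0 hα1 n).2) hexp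

lemma gcoef_tendsto (α : ℝ) (hα0 : 0 < α) (hα1 : α < 1) :
    Filter.Tendsto (gcoef α) Filter.atTop (nhds 0) := by
  rw [← Filter.tendsto_add_atTop_iff_nat 1]
  have hh := gcoef_sub_one_tendsto α hα0 hα1
  have hbound : ∀ n : ℕ, ‖gcoef α (n + 1)‖ ≤ α * gcoef (α - 1) n := by
    intro n
    rw [gcoef_succ_eq]
    have hpos := (gcoef_pos_le α hα0 hα1 n).1
    have h1 : (0 : ℝ) < (n : ℝ) + 1 := by positivity
    rw [norm_mul, Real.norm_eq_abs, Real.norm_eq_abs, abs_of_pos hpos]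
    have : |(-α) / ((n : ℝ) + 1)| = α / ((n : ℝ) + 1) := by
      rw [abs_div, abs_neg, abs_of_pos hα0, abs_of_pos h1]
    rw [this]
    apply mul_le_mul_of_nonneg_right _ hpos.le
    rw [div_le_iff₀ h1]
    nlinarith
  have hlim : Filter.Tendsto (fun n : ℕ => α * gcoef (α - 1) n)
      Filter.atTop (nhds 0) := by
    simpa using hh.const_mul α
  exact squeeze_zero_norm hbound hlim

theorem stmt3 (α : ℝ) (hα0 : 0 < α) (hα1 : α < 1) :
    Filter.Tendsto (fun n : ℕ => ∑ k ∈ Finset.range n, wcoef α k)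
      Filter.atTop (nhds 0) := by
  rw [← Filter.tendsto_add_atTop_iff_nat 1]
  have h1 := gcoef_sub_one_tendsto α hα0 hα1
  have h2 := (gcoef_tendsto α hα0 hα1).const_mul (1 - α / 2)
  have h3 : Filter.Tendsto
      (fun n : ℕ => gcoef (α - 1) n - (1 - α / 2) * gcoef α n)
      Filter.atTop (nhds 0) := by
    simpa using h1.sub h2
  exact h3.congr (fun n => (sum_wcoef α n).symm)
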